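/- Let K be an algebraically closed field with a non-archimedean valuation \(\nu\), and let \(\mathcal A\in K^{n\times n}\). Then the sequence of valuations of the eigenvalues of \(\mathcal A\) (counted with multiplicities) is weakly super-majorized by the sequence of tropical eigenvalues of the matrix \(A=(\nu(\mathcal A_{ij}))\in(\mathbb{R}\cup\{+\infty\})^{n\times n}\): for each k, the sum of the k smallest valuations of eigenvalues is at least the sum of the k smallest tropical eigenvalues of A. -/

import Mathlib

open scoped Classical

/-- The min-plus polynomial function `ŷ ↦ min_{0 ≤ k ≤ n} (P_k + k y)`. -/
noncomputable def tropEval (P : ℕ → WithTop ℝ) (n : ℕ) (y : ℝ) : WithTop ℝ :=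
  (Finset.range (n + 1)).inf fun k => P k + (((k : ℝ) * y : ℝ) : WithTop ℝ)

/-- The min-plus `k`-th trace of a matrix:
`tr^min_k(A) = min_{|J| = k} min_{σ ∈ S_J} ∑_{j ∈ J} A_{j σ(j)}`. -/
noncomputable def minplusTrace (n : ℕ) (A : Matrix (Fin n) (Fin n) (WithTop ℝ)) (k : ℕ) :
    WithTop ℝ :=
  (((Finset.univ : Finset (Fin n)).powersetCard k) ×ˢ
      (Finset.univ : Finset (Equiv.Perm (Fin n)))).inf
    fun p => if ∀ i, i ∉ p.1 → p.2 i = i then ∑ i ∈ p.1, A i (p.2 i) else ⊤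

/-- The coefficients of the min-plus characteristic polynomial
`per(Y I ⊕ A)`: its `k`-th coefficient is the min-plus `(n-k)`-th trace. -/
noncomputable def minplusCharCoeff (n : ℕ) (A : Matrix (Fin n) (Fin n) (WithTop ℝ)) :
    ℕ → WithTop ℝ :=
  fun k => minplusTrace n A (n - k)



section Val
variable {K : Type*} [Field K] {ν : K → WithTop ℝ}

lemma nu_one (hν0 : ∀ a, ν a = ⊤ ↔ a = 0) (hνmul : ∀ a b, ν (a * b) = ν a + ν b) :
    ν 1 = 0 := by
  have h : ν 1 = ν 1 + ν 1 := by rw [← hνmul]; norm_num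
  have h1 : ν 1 ≠ ⊤ := by simp [hν0]
  lift (ν 1) to ℝ using h1 with x hx
  rw [← WithTop.coe_add, WithTop.coe_eq_coe] at h
  have : x = 0 := by linarith
  simp [this]

lemma nu_neg (hν0 : ∀ a, ν a = ⊤ ↔ a = 0) (hνmul : ∀ a b, ν (a * b) = ν a + ν b) (a : K) :
    ν (-a) = ν a := by
  have hm1 : ν (-1 : K) = 0 := by
    have h : ν (-1 : K) + ν (-1 : K) = 0 := by
      rw [← hνmul]; norm_num [nu_one hν0 hνmul]
    have h1 : ν (-1 : K) ≠ ⊤ := fun ht => by simp [ht] at h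
    lift (ν (-1 : K)) to ℝ using h1 with x hx
    rw [← WithTop.coe_add, ← WithTop.coe_zero, WithTop.coe_eq_coe] at h
    have : x = 0 := by linarith
    simp [this]
  calc ν (-a) = ν ((-1) * a) := by ring_nf
    _ = ν a := by rw [hνmul, hm1, zero_add]

lemma nu_sum_ge {ι : Type*} (hν0 : ∀ a, ν a = ⊤ ↔ a = 0)
    (hνadd : ∀ a b, min (ν a) (ν b) ≤ ν (a + b))
    (s : Finset ι) (f : ι → K) (v : WithTop ℝ) (h : ∀ i ∈ s, v ≤ ν (f i)) :
    v ≤ ν (∑ i ∈ s, f i) := by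
  classical
  induction s using Finset.induction_on with
  | empty => simp [(hν0 0).mpr rfl]
  | insert a s hx ih =>
    rw [Finset.sum_insert hx]
    refine le_trans ?_ (hνadd _ _)
    exact le_min (h a (Finset.mem_insert_self a s))
      (ih fun i hi => h i (Finset.mem_insert_of_mem hi))

lemma nu_prod {ι : Type*} (hν0 : ∀ a, ν a = ⊤ ↔ a = 0)
    (hνmul : ∀ a b, ν (a * b) = ν a + ν b)
    (s : Finset ι) (f : ι → K) :
    ν (∏ i ∈ s, f i) = ∑ i ∈ s, ν (f i) := by
  classical
  induction s using Finset.induction_on with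
  | empty => simp [nu_one hν0 hνmul]
  | insert a s hx ih => rw [Finset.prod_insert hx, Finset.sum_insert hx, hνmul, ih]

lemma nu_add_eq (hν0 : ∀ a, ν a = ⊤ ↔ a = 0)
    (hνadd : ∀ a b, min (ν a) (ν b) ≤ ν (a + b))
    (hνmul : ∀ a b, ν (a * b) = ν a + ν b)
    {a b : K} (h : ν a < ν b) : ν (a + b) = ν a := by
  have h1 : ν a ≤ ν (a + b) := le_trans (le_min le_rfl h.le) (hνadd a b)
  have h2 : ν (a + b) ≤ ν a := by
    have h3 := hνadd (a + b) (-b)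
    simp only [add_neg_cancel_right, nu_neg hν0 hνmul] at h3
    rcases min_le_iff.mp h3 with h4 | h4
    · exact h4
    · exact absurd (lt_of_lt_of_le h h4) (lt_irrefl _)
  exact le_antisymm h2 h1

end Val

section Val2
variable {K : Type*} [Field K] {ν : K → WithTop ℝ}

lemma nu_lt_sum {ι : Type*} (hν0 : ∀ a, ν a = ⊤ ↔ a = 0)
    (hνadd : ∀ a b, min (ν a) (ν b) ≤ ν (a + b))
    (s : Finset ι) (f : ι → K) (v : WithTop ℝ) (hv : v ≠ ⊤)
    (h : ∀ i ∈ s, v < ν (f i)) : v < ν (∑ i ∈ s, f i) := by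
  classical
  induction s using Finset.induction_on with
  | empty => simpa [(hν0 0).mpr rfl] using lt_top_iff_ne_top.mpr hv
  | insert a s hx ih =>
    rw [Finset.sum_insert hx]
    refine lt_of_lt_of_le ?_ (hνadd _ _)
    exact lt_min (h a (Finset.mem_insert_self a s))
      (ih fun i hi => h i (Finset.mem_insert_of_mem hi))

lemma nu_neg_one_pow (hν0 : ∀ a, ν a = ⊤ ↔ a = 0)
    (hνmul : ∀ a b, ν (a * b) = ν a + ν b) (e : ℕ) : ν ((-1 : K) ^ e) = 0 := by
  rcases Nat.even_or_odd e with he | he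
  · rw [he.neg_one_pow, nu_one hν0 hνmul]
  · rw [he.neg_one_pow]
    rw [show (-1 : K) = -(1:K) from rfl, nu_neg hν0 hνmul, nu_one hν0 hνmul]
end Val2

section PartI
variable {K : Type*} [Field K] {ν : K → WithTop ℝ}

-- the key pointwise bound: for σ, T, the minplusTrace is below the corresponding term
lemma trace_le_term {n : ℕ} (νA : Matrix (Fin n) (Fin n) (WithTop ℝ))
    (σ : Equiv.Perm (Fin n)) {j : ℕ} (T : Finset (Fin n))
    (hTsub : T ⊆ Finset.univ.filter (fun i => σ i = i))
    (hTcard : T.card = (Finset.univ.filter (fun i => σ i = i)).card - j)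
    (hj : j ≤ (Finset.univ.filter (fun i => σ i = i)).card) :
    minplusTrace n νA (n - j) ≤
      ∑ i ∈ Finset.univ.filter (fun i => ¬ σ i = i), νA (σ i) i + ∑ i ∈ T, νA i i := by
  classical
  set F := Finset.univ.filter (fun i => σ i = i) with hF
  set Fc := Finset.univ.filter (fun i => ¬ σ i = i) with hFc
  have hdisj : Disjoint Fc T := by
    refine Finset.disjoint_left.mpr fun i hi hiT => ?_
    have h1 := hTsub hiT
    simp only [hF, hFc, Finset.mem_filter] at h1 hi
    exact hi.2 h1.2
  have hFccard : Fc.card = n - F.card := by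
    have := Finset.card_filter_add_card_filter_not
      (s := (Finset.univ : Finset (Fin n))) (p := fun i => σ i = i)
    simp only [← hF, ← hFc, Finset.card_univ, Fintype.card_fin] at this
    omega
  have hFle : F.card ≤ n := le_trans (Finset.card_le_card (Finset.filter_subset _ _))
    (by simp)
  set J := Fc ∪ T with hJ
  have hJcard : J.card = n - j := by
    rw [hJ, Finset.card_union_of_disjoint hdisj, hFccard, hTcard]; omega
  have hmem : (J, σ⁻¹) ∈ ((Finset.univ : Finset (Fin n)).powersetCard (n - j) ×ˢ
      (Finset.univ : Finset (Equiv.Perm (Fin n)))) := by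
    rw [Finset.mem_product]
    exact ⟨Finset.mem_powersetCard_univ.mpr hJcard, Finset.mem_univ _⟩
  have hcond : ∀ i, i ∉ J → σ⁻¹ i = i := by
    intro i hi
    have hiF : σ i = i := by
      by_contra hne
      exact hi (Finset.mem_union_left _ (by simp [hFc, hne]))
    conv_lhs => rw [← hiF]
    exact σ.symm_apply_apply i
  have hle := Finset.inf_le (f := fun p : Finset (Fin n) × Equiv.Perm (Fin n) =>
    if ∀ i, i ∉ p.1 → p.2 i = i then ∑ i ∈ p.1, νA i (p.2 i) else ⊤) hmem
  rw [minplusTrace]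
  refine le_trans hle ?_
  dsimp only
  rw [if_pos hcond]
  rw [Finset.sum_union hdisj]
  have h1 : ∑ i ∈ T, νA i (σ⁻¹ i) = ∑ i ∈ T, νA i i := by
    refine Finset.sum_congr rfl fun i hi => ?_
    have h2 := hTsub hi
    simp only [hF, Finset.mem_filter] at h2
    rw [show σ⁻¹ i = i by conv_lhs => rw [← h2.2]; exact σ.symm_apply_apply i]
  have h2 : ∑ i ∈ Fc, νA i (σ⁻¹ i) = ∑ i ∈ Fc, νA (σ i) i := by
    refine Finset.sum_equiv σ.symm ?_ ?_
    · intro i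
      simp only [hFc, Finset.mem_filter, Finset.mem_univ, true_and]
      have key : σ (σ.symm i) = i := σ.apply_symm_apply i
      constructor
      · intro hi heq
        have h5 : i = σ.symm i := key.symm.trans heq
        exact hi ((congrArg σ h5).trans key)
      · intro hi heq
        have h5 : σ.symm i = i :=
          (congrArg σ.symm heq).symm.trans (σ.symm_apply_apply i)
        exact hi (by rw [h5]; exact heq)
    · intro i _
      rw [σ.apply_symm_apply, Equiv.Perm.inv_def]
  rw [h1, h2]
end PartI

section PartIb
variable {K : Type*} [Field K] {ν : K → WithTop ℝ}
open Polynomial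

lemma partI (hν0 : ∀ a, ν a = ⊤ ↔ a = 0)
    (hνadd : ∀ a b, min (ν a) (ν b) ≤ ν (a + b))
    (hνmul : ∀ a b, ν (a * b) = ν a + ν b)
    {n : ℕ} (A : Matrix (Fin n) (Fin n) K) {j : ℕ} (hj : j ≤ n) :
    minplusCharCoeff n (fun i k => ν (A i k)) j ≤ ν ((Matrix.charpoly A).coeff j) := by
  classical
  have hdet : (Matrix.charpoly A).coeff j
      = ∑ σ : Equiv.Perm (Fin n), (((Equiv.Perm.sign σ : ℤ) : K)
          * (∏ i, Matrix.charmatrix A (σ i) i).coeff j) := by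
    rw [show Matrix.charpoly A = (Matrix.charmatrix A).det from rfl, Matrix.det_apply']
    rw [Polynomial.finset_sum_coeff]
    refine Finset.sum_congr rfl fun σ _ => ?_
    rw [← Polynomial.C_eq_intCast, Polynomial.coeff_C_mul]
  rw [hdet]
  refine nu_sum_ge hν0 hνadd _ _ _ fun σ _ => ?_
  -- remove the sign
  have hsgn : ν (((Equiv.Perm.sign σ : ℤ) : K)
      * (∏ i, Matrix.charmatrix A (σ i) i).coeff j)
      = ν ((∏ i, Matrix.charmatrix A (σ i) i).coeff j) := by
    rw [hνmul]
    rcases Int.units_eq_one_or (Equiv.Perm.sign σ) with h | h <;>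
      simp [h, nu_one hν0 hνmul, nu_neg hν0 hνmul]
  rw [hsgn]
  set F := Finset.univ.filter (fun i => σ i = i) with hF
  set Fc := Finset.univ.filter (fun i => ¬ σ i = i) with hFc
  set b := ∏ i ∈ Fc, (-(A (σ i) i)) with hb
  set p := ∏ i ∈ F, (X - C (A i i)) with hp
  have hsplit : (∏ i, Matrix.charmatrix A (σ i) i) = p * C b := by
    rw [← Finset.prod_filter_mul_prod_filter_not Finset.univ (fun i => σ i = i)]
    congr 1
    · refine Finset.prod_congr rfl fun i hi => ?_
      simp only [hF, Finset.mem_filter, Finset.mem_univ, true_and] at hi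
      rw [hi, Matrix.charmatrix_apply_eq]
    · rw [hb, map_prod]
      refine Finset.prod_congr rfl fun i hi => ?_
      simp only [hFc, Finset.mem_filter, Finset.mem_univ, true_and] at hi
      rw [Matrix.charmatrix_apply_ne _ _ _ hi, map_neg]
  rw [hsplit, Polynomial.coeff_mul_C, hνmul]
  have hbval : ν b = ∑ i ∈ Fc, ν (A (σ i) i) := by
    rw [hb, nu_prod hν0 hνmul]
    exact Finset.sum_congr rfl fun i _ => nu_neg hν0 hνmul _
  by_cases hjF : j ≤ F.card
  · -- coefficient via Vieta
    have hcard : Multiset.card (F.val.map (fun i => A i i)) = F.card := by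
      rw [Multiset.card_map]; rfl
    have hps : p = ((F.val.map (fun i => A i i)).map (fun t => X - C t)).prod := by
      rw [Multiset.map_map]; rfl
    have hcoeff : p.coeff j = (-1) ^ (F.card - j) *
        ∑ T ∈ F.powersetCard (F.card - j), ∏ i ∈ T, A i i := by
      rw [hps, Multiset.prod_X_sub_C_coeff _ (by rw [hcard]; exact hjF), hcard,
        Finset.esymm_map_val]
    rw [hcoeff, hνmul, nu_neg_one_pow hν0 hνmul, zero_add]
    -- bound via inf over subsets
    set PS := F.powersetCard (F.card - j) with hPS
    have hne : PS.Nonempty := Finset.powersetCard_nonempty.mpr (Nat.sub_le _ _)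
    obtain ⟨T₀, hT₀mem, hT₀⟩ := Finset.exists_mem_eq_inf PS hne
      (fun T => ν (∏ i ∈ T, A i i))
    have hsum : PS.inf (fun T => ν (∏ i ∈ T, A i i))
        ≤ ν (∑ T ∈ PS, ∏ i ∈ T, A i i) :=
      nu_sum_ge hν0 hνadd _ _ _ fun T hT => Finset.inf_le hT
    refine le_trans ?_ (add_le_add_left hsum _)
    rw [hT₀, hbval, nu_prod hν0 hνmul, add_comm]
    obtain ⟨hT₀sub, hT₀card⟩ := Finset.mem_powersetCard.mp hT₀mem
    exact trace_le_term (fun i k => ν (A i k)) σ T₀ hT₀sub hT₀card hjF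
  · -- coefficient vanishes
    have hdeg : p.natDegree < j := by
      refine lt_of_le_of_lt ?_ (lt_of_not_ge hjF)
      refine le_trans (Polynomial.natDegree_prod_le _ _) ?_
      simp [Polynomial.natDegree_X_sub_C]
    rw [Polynomial.coeff_eq_zero_of_natDegree_lt hdeg]
    simp [(hν0 0).mpr rfl]
end PartIb

section PartII
variable {K : Type*} [Field K] {ν : K → WithTop ℝ}
open Polynomial

lemma wt_add_lt_add {a b c d : WithTop ℝ} (h1 : a < b) (h2 : c ≤ d) (hd : d ≠ ⊤) :
    a + c < b + d := by
  rcases eq_or_ne b ⊤ with hb | hb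
  · subst hb; simp at hd ⊢
    exact ⟨lt_top_iff_ne_top.mpr h1.ne_top,
      lt_of_le_of_lt h2 (lt_top_iff_ne_top.mpr hd)⟩
  · lift b to ℝ using hb
    lift d to ℝ using hd
    lift a to ℝ using h1.ne_top
    lift c to ℝ using (lt_of_le_of_lt h2 (WithTop.coe_lt_top d)).ne_top
    rw [← WithTop.coe_add, ← WithTop.coe_add, WithTop.coe_lt_coe]
    rw [WithTop.coe_lt_coe] at h1
    rw [WithTop.coe_le_coe] at h2
    linarith

lemma wt_nsmul_coe (k : ℕ) (y : ℝ) :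
    (k • ((y : ℝ) : WithTop ℝ)) = (((k : ℝ) * y : ℝ) : WithTop ℝ) := by
  induction k with
  | zero => simp
  | succ k ih =>
    rw [succ_nsmul, ih, ← WithTop.coe_add, WithTop.coe_eq_coe]
    push_cast
    ring

lemma ofFn_comp_perm_multiset {α : Type*} {n : ℕ} (f : Fin n → α) (σ : Equiv.Perm (Fin n)) :
    (↑(List.ofFn (f ∘ σ)) : Multiset α) = ↑(List.ofFn f) := by
  rw [← Fin.univ_val_map, ← Fin.univ_val_map]
  have h1 : (Finset.univ.val.map (⇑σ)) = Finset.univ.val := by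
    have h2 := Finset.map_univ_equiv σ
    have h3 := congrArg Finset.val h2
    rw [Finset.map_val] at h3
    exact h3
  calc Finset.univ.val.map (f ∘ σ) = (Finset.univ.val.map σ).map f := by
        rw [Multiset.map_map]
    _ = Finset.univ.val.map f := by rw [h1]

lemma exists_lambda {n : ℕ} (r : Multiset K) (μ : Fin n → WithTop ℝ)
    (hμ : Monotone μ) (h : r.map ν = (↑(List.ofFn μ) : Multiset (WithTop ℝ))) :
    ∃ lam : Fin n → K, (Finset.univ.val.map lam = r) ∧ ∀ i, ν (lam i) = μ i := by
  classical
  have hcard : Multiset.card r = n := by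
    have h1 := congrArg Multiset.card h
    simpa using h1
  obtain ⟨l, hl⟩ : ∃ l : List K, (↑l : Multiset K) = r := ⟨r.toList, r.coe_toList⟩
  have hlen : l.length = n := by rw [← hcard, ← hl]; rfl
  subst hlen
  set lam0 : Fin l.length → K := l.get with hlam0
  have hofFn : List.ofFn lam0 = l := List.ofFn_get l
  set σ := Tuple.sort (ν ∘ lam0) with hσ
  refine ⟨lam0 ∘ σ, ?_, ?_⟩
  · rw [Fin.univ_val_map, ofFn_comp_perm_multiset, hofFn, hl]
  · have hmono : Monotone ((ν ∘ lam0) ∘ σ) := Tuple.monotone_sort (ν ∘ lam0)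
    have hperm : (↑(List.ofFn ((ν ∘ lam0) ∘ σ)) : Multiset (WithTop ℝ))
        = ↑(List.ofFn μ) := by
      rw [ofFn_comp_perm_multiset]
      have : List.ofFn (ν ∘ lam0) = l.map ν := by
        calc List.ofFn (ν ∘ lam0) = (List.ofFn lam0).map ν := (List.map_ofFn ..).symm
          _ = l.map ν := by rw [hofFn]
      rw [this, ← Multiset.map_coe, hl, h]
    have hsorted1 := hmono.sortedLE_ofFn
    have hsorted2 := hμ.sortedLE_ofFn
    have heq := List.Perm.eq_of_sortedLE hsorted1 hsorted2 (Multiset.coe_eq_coe.mp hperm)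
    have := List.ofFn_injective heq
    intro i
    exact congrFun this i

lemma T0_card {n m : ℕ} (hm : m ≤ n) :
    (Finset.univ.filter (fun i : Fin n => i.val < m)).card = m := by
  classical
  have h1 : (Finset.univ.filter (fun i : Fin n => i.val < m)).card
      = ((Finset.univ.filter (fun i : Fin n => i.val < m)).image Fin.val).card :=
    (Finset.card_image_of_injective _ Fin.val_injective).symm
  rw [h1]
  have h2 : (Finset.univ.filter (fun i : Fin n => i.val < m)).image Fin.val
      = Finset.range m := by
    ext j
    simp only [Finset.mem_image, Finset.mem_filter, Finset.mem_univ, true_and,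
      Finset.mem_range]
    constructor
    · rintro ⟨i, hi, rfl⟩; exact hi
    · intro hj; exact ⟨⟨j, lt_of_lt_of_le hj hm⟩, hj, rfl⟩
  rw [h2, Finset.card_range]

lemma esymm_strict {n m : ℕ} (μ : Fin n → WithTop ℝ) (y : ℝ) (hm : m ≤ n)
    (hlt : ∀ i : Fin n, i.val < m ↔ μ i < (y : WithTop ℝ))
    (T : Finset (Fin n)) (hTcard : T.card = m)
    (hTne : T ≠ Finset.univ.filter (fun i : Fin n => i.val < m)) :
    ∑ i ∈ Finset.univ.filter (fun i : Fin n => i.val < m), μ i < ∑ i ∈ T, μ i := by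
  classical
  set T₀ := Finset.univ.filter (fun i : Fin n => i.val < m) with hT₀
  have hT₀card : T₀.card = m := T0_card hm
  have hfin : ∀ i ∈ T₀, μ i ≠ ⊤ := by
    intro i hi
    simp only [hT₀, Finset.mem_filter, Finset.mem_univ, true_and] at hi
    exact ((hlt i).mp hi).ne_top
  have hne : (T₀ \ T).Nonempty := by
    rw [Finset.sdiff_nonempty]
    intro hsub
    exact hTne (Finset.eq_of_subset_of_card_le hsub (by rw [hT₀card, hTcard]) ).symm
  have hcards : (T₀ \ T).card = (T \ T₀).card :=
    Finset.card_sdiff_comm (by rw [hT₀card, hTcard])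
  obtain ⟨j₀, hj₀⟩ := hne
  -- strict bound on the sdiff sums
  have key1 : ∑ i ∈ T₀ \ T, μ i < (T₀ \ T).card • (y : WithTop ℝ) := by
    rw [← Finset.add_sum_erase _ _ hj₀]
    have hcard' : ((T₀ \ T).erase j₀).card = (T₀ \ T).card - 1 :=
      Finset.card_erase_of_mem hj₀
    have h1 : μ j₀ < (y : WithTop ℝ) := by
      have := (Finset.mem_sdiff.mp hj₀).1
      simp only [hT₀, Finset.mem_filter, Finset.mem_univ, true_and] at this
      exact (hlt j₀).mp this
    have h2 : ∑ i ∈ (T₀ \ T).erase j₀, μ i ≤ ((T₀ \ T).card - 1) • (y : WithTop ℝ) := by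
      rw [← hcard']
      calc ∑ i ∈ (T₀ \ T).erase j₀, μ i ≤ ∑ _i ∈ (T₀ \ T).erase j₀, (y : WithTop ℝ) := by
            refine Finset.sum_le_sum fun i hi => ?_
            have hi' := (Finset.mem_sdiff.mp (Finset.mem_of_mem_erase hi)).1
            simp only [hT₀, Finset.mem_filter, Finset.mem_univ, true_and] at hi'
            exact ((hlt i).mp hi').le
        _ = ((T₀ \ T).erase j₀).card • (y : WithTop ℝ) := by rw [Finset.sum_const]
    have h3 : (T₀ \ T).card • (y : WithTop ℝ)
        = (y : WithTop ℝ) + ((T₀ \ T).card - 1) • (y : WithTop ℝ) := by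
      have hpos : 1 ≤ (T₀ \ T).card := Finset.card_pos.mpr ⟨j₀, hj₀⟩
      conv_lhs => rw [show (T₀ \ T).card = 1 + ((T₀ \ T).card - 1) by omega]
      rw [add_nsmul, one_nsmul]
    rw [h3]
    refine wt_add_lt_add h1 h2 ?_
    rw [wt_nsmul_coe]
    exact WithTop.coe_ne_top
  have key2 : (T \ T₀).card • (y : WithTop ℝ) ≤ ∑ i ∈ T \ T₀, μ i := by
    calc (T \ T₀).card • (y : WithTop ℝ) = ∑ _i ∈ T \ T₀, (y : WithTop ℝ) := by
          rw [Finset.sum_const]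
      _ ≤ ∑ i ∈ T \ T₀, μ i := by
          refine Finset.sum_le_sum fun i hi => ?_
          have hi' := (Finset.mem_sdiff.mp hi).2
          simp only [hT₀, Finset.mem_filter, Finset.mem_univ, true_and] at hi'
          exact le_of_not_gt fun hlt' => hi' ((hlt i).mpr hlt')
  have hinter : ∑ i ∈ T₀ ∩ T, μ i ≠ ⊤ := by
    rw [WithTop.sum_ne_top]
    exact fun i hi => hfin i (Finset.mem_of_mem_inter_left hi)
  calc ∑ i ∈ T₀, μ i = ∑ i ∈ T₀ ∩ T, μ i + ∑ i ∈ T₀ \ T, μ i :=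
        (Finset.sum_inter_add_sum_sdiff _ _ _).symm
    _ < ∑ i ∈ T₀ ∩ T, μ i + (T₀ \ T).card • (y : WithTop ℝ) :=
        WithTop.add_lt_add_left hinter key1
    _ = ∑ i ∈ T ∩ T₀, μ i + (T \ T₀).card • (y : WithTop ℝ) := by
        rw [Finset.inter_comm, hcards]
    _ ≤ ∑ i ∈ T ∩ T₀, μ i + ∑ i ∈ T \ T₀, μ i := add_le_add_right key2 _
    _ = ∑ i ∈ T, μ i := Finset.sum_inter_add_sum_sdiff _ _ _
end PartII

section PartIIb
variable {K : Type*} [Field K] {ν : K → WithTop ℝ}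
open Polynomial

lemma partII (hν0 : ∀ a, ν a = ⊤ ↔ a = 0)
    (hνadd : ∀ a b, min (ν a) (ν b) ≤ ν (a + b))
    (hνmul : ∀ a b, ν (a * b) = ν a + ν b)
    {n : ℕ} (A : Matrix (Fin n) (Fin n) K)
    (μ : Fin n → WithTop ℝ) (hμ : Monotone μ)
    (hroots : Multiset.map ν (Matrix.charpoly A).roots = (↑(List.ofFn μ) : Multiset (WithTop ℝ)))
    (y : ℝ) (m : ℕ) (hm : m ≤ n)
    (hlt : ∀ i : Fin n, i.val < m ↔ μ i < (y : WithTop ℝ)) :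
    ν ((Matrix.charpoly A).coeff (n - m))
      ≤ ∑ i ∈ Finset.univ.filter (fun i : Fin n => i.val < m), μ i := by
  classical
  have hmonic := Matrix.charpoly_monic A
  have hdeg : (Matrix.charpoly A).natDegree = n := by
    rw [Matrix.charpoly_natDegree_eq_dim]; exact Fintype.card_fin n
  have hcard : Multiset.card (Matrix.charpoly A).roots = n := by
    have h1 := congrArg Multiset.card hroots; simpa using h1
  have hsplits : Polynomial.Splits (Matrix.charpoly A) :=
    Polynomial.splits_iff_card_roots.mpr (hcard.trans hdeg.symm)
  obtain ⟨lam, hlamr, hlam⟩ := exists_lambda (Matrix.charpoly A).roots μ hμ hroots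
  have hfacto := hsplits.eq_prod_roots_of_monic hmonic
  have hcoeff : (Matrix.charpoly A).coeff (n - m)
      = (-1) ^ m * ∑ T ∈ (Finset.univ : Finset (Fin n)).powersetCard m, ∏ i ∈ T, lam i := by
    conv_lhs => rw [hfacto]
    rw [Multiset.prod_X_sub_C_coeff _ (by rw [hcard]; omega)]
    rw [hcard, show n - (n - m) = m from by omega]
    rw [← hlamr, Finset.esymm_map_val]
  rw [hcoeff, hνmul, nu_neg_one_pow hν0 hνmul, zero_add]
  set T₀ := Finset.univ.filter (fun i : Fin n => i.val < m) with hT₀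
  have hT₀mem : T₀ ∈ (Finset.univ : Finset (Fin n)).powersetCard m :=
    Finset.mem_powersetCard_univ.mpr (T0_card hm)
  rw [← Finset.add_sum_erase _ _ hT₀mem]
  have hv : ν (∏ i ∈ T₀, lam i) = ∑ i ∈ T₀, μ i := by
    rw [nu_prod hν0 hνmul]; exact Finset.sum_congr rfl fun i _ => hlam i
  have hvne : (∑ i ∈ T₀, μ i) ≠ ⊤ := by
    rw [WithTop.sum_ne_top]
    intro i hi
    simp only [hT₀, Finset.mem_filter, Finset.mem_univ, true_and] at hi
    exact ((hlt i).mp hi).ne_top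
  have hstrict : ∀ T ∈ ((Finset.univ : Finset (Fin n)).powersetCard m).erase T₀,
      ν (∏ i ∈ T₀, lam i) < ν (∏ i ∈ T, lam i) := by
    intro T hT
    rw [hv, nu_prod hν0 hνmul]
    have h1 : ∑ i ∈ T, ν (lam i) = ∑ i ∈ T, μ i :=
      Finset.sum_congr rfl fun i _ => hlam i
    rw [h1]
    obtain ⟨hTne, hTmem⟩ := Finset.mem_erase.mp hT
    exact esymm_strict μ y hm hlt T (Finset.mem_powersetCard_univ.mp hTmem) hTne
  have hlt2 : ν (∏ i ∈ T₀, lam i)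
      < ν (∑ T ∈ ((Finset.univ : Finset (Fin n)).powersetCard m).erase T₀,
          ∏ i ∈ T, lam i) :=
    nu_lt_sum hν0 hνadd _ _ _ (by rw [hv]; exact hvne) hstrict
  rw [nu_add_eq hν0 hνadd hνmul hlt2, hv]
end PartIIb

section Assembly
open Finset

lemma mono_count {n : ℕ} (μ : Fin n → WithTop ℝ) (hμ : Monotone μ) (y : ℝ) (i : Fin n) :
    i.val < (Finset.univ.filter (fun i => μ i < ((y : ℝ) : WithTop ℝ))).card
      ↔ μ i < (y : WithTop ℝ) := by
  classical
  set s := Finset.univ.filter (fun i : Fin n => μ i < ((y : ℝ) : WithTop ℝ)) with hs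
  constructor
  · intro hi
    by_contra hnot
    have hsub : s ⊆ Finset.Iio i := by
      intro j hj
      simp only [hs, Finset.mem_filter, Finset.mem_univ, true_and] at hj
      rw [Finset.mem_Iio]
      by_contra hij
      exact hnot (lt_of_le_of_lt (hμ (le_of_not_gt hij)) hj)
    have := Finset.card_le_card hsub
    rw [Fin.card_Iio] at this
    omega
  · intro hi
    have hsub : Finset.Iic i ⊆ s := by
      intro j hj
      rw [Finset.mem_Iic] at hj
      simp only [hs, Finset.mem_filter, Finset.mem_univ, true_and]
      exact lt_of_le_of_lt (hμ hj) hi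
    have := Finset.card_le_card hsub
    rw [Fin.card_Iic] at this
    omega

lemma count_le {n : ℕ} (μ : Fin n → WithTop ℝ) (y : ℝ) :
    (Finset.univ.filter (fun i : Fin n => μ i < ((y : ℝ) : WithTop ℝ))).card ≤ n := by
  refine le_trans (Finset.card_le_card (Finset.filter_subset _ _)) ?_
  simp

lemma minplus_n_eq_zero {n : ℕ} (νA : Matrix (Fin n) (Fin n) (WithTop ℝ)) :
    minplusCharCoeff n νA n = 0 := by
  classical
  rw [minplusCharCoeff]
  simp only [Nat.sub_self]
  rw [minplusTrace]
  apply le_antisymm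
  · have hmem : ((∅ : Finset (Fin n)), (1 : Equiv.Perm (Fin n))) ∈
        (((Finset.univ : Finset (Fin n)).powersetCard 0) ×ˢ
          (Finset.univ : Finset (Equiv.Perm (Fin n)))) := by
      rw [Finset.mem_product]
      exact ⟨Finset.mem_powersetCard_univ.mpr (Finset.card_empty), Finset.mem_univ _⟩
    refine le_trans (Finset.inf_le hmem) ?_
    dsimp only
    rw [if_pos (by intro i _; rfl)]
    simp
  · refine Finset.le_inf fun p hpmem => ?_
    have hp1 : p.1 = ∅ := by
      have h1 := (Finset.mem_product.mp hpmem).1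
      exact Finset.card_eq_zero.mp (Finset.mem_powersetCard_univ.mp h1)
    by_cases hp : ∀ i, i ∉ p.1 → p.2 i = i
    · rw [if_pos hp, hp1]
      simp
    · rw [if_neg hp]; exact le_top
end Assembly

section Assembly2
open Finset

lemma neg_filter_card {n k : ℕ} (hk : k ≤ n) :
    (Finset.univ.filter (fun i : Fin n => ¬ i.val < k)).card = n - k := by
  classical
  have h1 := Finset.card_filter_add_card_filter_not
    (s := (Finset.univ : Finset (Fin n))) (p := fun i : Fin n => i.val < k)
  rw [T0_card hk, Finset.card_univ, Fintype.card_fin] at h1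
  omega

lemma sum_if_split {n k : ℕ} (hk : k ≤ n) (μ : Fin n → WithTop ℝ) (y : ℝ) :
    ∑ i : Fin n, (if i.val < k then μ i else ((y : ℝ) : WithTop ℝ))
      = ∑ i ∈ Finset.univ.filter (fun i : Fin n => i.val < k), μ i
        + ((((n - k : ℕ) : ℝ) * y : ℝ) : WithTop ℝ) := by
  classical
  rw [← Finset.sum_filter_add_sum_filter_not Finset.univ (fun i : Fin n => i.val < k)]
  congr 1
  · refine Finset.sum_congr rfl fun i hi => ?_
    exact if_pos (Finset.mem_filter.mp hi).2
  · rw [Finset.sum_congr rfl (fun i hi => if_neg (Finset.mem_filter.mp hi).2),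
      Finset.sum_const, neg_filter_card hk, wt_nsmul_coe]
end Assembly2

section Star
variable {K : Type*} [Field K] {ν : K → WithTop ℝ}

lemma star_bound (hν0 : ∀ a, ν a = ⊤ ↔ a = 0)
    (hνadd : ∀ a b, min (ν a) (ν b) ≤ ν (a + b))
    (hνmul : ∀ a b, ν (a * b) = ν a + ν b)
    {n : ℕ} (A : Matrix (Fin n) (Fin n) K)
    (c : Fin n → WithTop ℝ)
    (hfact : ∀ y : ℝ,
      tropEval (minplusCharCoeff n fun i j => ν (A i j)) n y =
        minplusCharCoeff n (fun i j => ν (A i j)) n +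
          ∑ i : Fin n, min (y : WithTop ℝ) (c i))
    (μ : Fin n → WithTop ℝ) (hμ : Monotone μ)
    (hroots : Multiset.map ν (Matrix.charpoly A).roots = (↑(List.ofFn μ) : Multiset (WithTop ℝ)))
    (k : ℕ) (y : ℝ) :
    ∑ i : Fin n, min ((y : ℝ) : WithTop ℝ) (c i)
      ≤ ∑ i : Fin n, (if i.val < k then μ i else ((y : ℝ) : WithTop ℝ)) := by
  classical
  set m := (Finset.univ.filter (fun i : Fin n => μ i < ((y : ℝ) : WithTop ℝ))).card with hm
  have hmn : m ≤ n := count_le μ y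
  have hiff : ∀ i : Fin n, i.val < m ↔ μ i < (y : WithTop ℝ) := mono_count μ hμ y
  have h1 : ∑ i : Fin n, min ((y : ℝ) : WithTop ℝ) (c i)
      = tropEval (minplusCharCoeff n fun i j => ν (A i j)) n y := by
    rw [hfact y, show minplusCharCoeff n (fun i j => ν (A i j)) n = 0 from minplus_n_eq_zero _, zero_add]
  have h2 : tropEval (minplusCharCoeff n fun i j => ν (A i j)) n y
      ≤ minplusCharCoeff n (fun i j => ν (A i j)) (n - m)
        + ((((n - m : ℕ) : ℝ) * y : ℝ) : WithTop ℝ) := by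
    refine Finset.inf_le ?_
    rw [Finset.mem_range]
    omega
  have h3 : minplusCharCoeff n (fun i j => ν (A i j)) (n - m)
      ≤ ν ((Matrix.charpoly A).coeff (n - m)) :=
    partI hν0 hνadd hνmul A (Nat.sub_le n m)
  have h4 : ν ((Matrix.charpoly A).coeff (n - m))
      ≤ ∑ i ∈ Finset.univ.filter (fun i : Fin n => i.val < m), μ i :=
    partII hν0 hνadd hνmul A μ hμ hroots y m hmn hiff
  have h6 : ∀ i : Fin n, (if i.val < m then μ i else ((y : ℝ) : WithTop ℝ))
      ≤ (if i.val < k then μ i else ((y : ℝ) : WithTop ℝ)) := by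
    intro i
    by_cases him : i.val < m <;> by_cases hik : i.val < k
    · rw [if_pos him, if_pos hik]
    · rw [if_pos him, if_neg hik]; exact ((hiff i).mp him).le
    · rw [if_neg him, if_pos hik]; exact le_of_not_gt fun h => him ((hiff i).mpr h)
    · rw [if_neg him, if_neg hik]
  calc ∑ i : Fin n, min ((y : ℝ) : WithTop ℝ) (c i)
      ≤ minplusCharCoeff n (fun i j => ν (A i j)) (n - m)
        + ((((n - m : ℕ) : ℝ) * y : ℝ) : WithTop ℝ) := by rw [h1]; exact h2
    _ ≤ ∑ i ∈ Finset.univ.filter (fun i : Fin n => i.val < m), μ i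
        + ((((n - m : ℕ) : ℝ) * y : ℝ) : WithTop ℝ) :=
        add_le_add_left (le_trans h3 h4) _
    _ = ∑ i : Fin n, (if i.val < m then μ i else ((y : ℝ) : WithTop ℝ)) :=
        (sum_if_split hmn μ y).symm
    _ ≤ ∑ i : Fin n, (if i.val < k then μ i else ((y : ℝ) : WithTop ℝ)) :=
        Finset.sum_le_sum fun i _ => h6 i
end Star

section Final
open Finset

lemma final_step {n k : ℕ} (hk : k ≤ n) (c μ : Fin n → WithTop ℝ) (y : ℝ)
    (hstar : ∑ i : Fin n, min ((y : ℝ) : WithTop ℝ) (c i)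
      ≤ ∑ i : Fin n, (if i.val < k then μ i else ((y : ℝ) : WithTop ℝ)))
    (h1 : ∀ i : Fin n, i.val < k → c i ≤ (y : WithTop ℝ))
    (h2 : ∀ i : Fin n, ¬ i.val < k → ((y : ℝ) : WithTop ℝ) ≤ c i) :
    ∑ i ∈ Finset.univ.filter (fun i : Fin n => i.val < k), c i ≤
      ∑ i ∈ Finset.univ.filter (fun i : Fin n => i.val < k), μ i := by
  classical
  have hmin : ∑ i : Fin n, min ((y : ℝ) : WithTop ℝ) (c i)
      = ∑ i ∈ Finset.univ.filter (fun i : Fin n => i.val < k), c i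
        + ((((n - k : ℕ) : ℝ) * y : ℝ) : WithTop ℝ) := by
    have : ∀ i : Fin n, min ((y : ℝ) : WithTop ℝ) (c i)
        = (if i.val < k then c i else ((y : ℝ) : WithTop ℝ)) := by
      intro i
      by_cases hik : i.val < k
      · rw [if_pos hik]; exact min_eq_right (h1 i hik)
      · rw [if_neg hik]; exact min_eq_left (h2 i hik)
    rw [Finset.sum_congr rfl fun i _ => this i, sum_if_split hk c y]
  rw [hmin, sum_if_split hk μ y] at hstar
  exact (WithTop.add_le_add_iff_right (WithTop.coe_ne_top)).mp hstar
end Final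

/-- Majorization of valuations of eigenvalues: the increasingly ordered
valuations `μ` of the eigenvalues of `𝒜` (roots of the characteristic
polynomial, with multiplicities) are weakly super-majorized by the
increasingly ordered tropical eigenvalues `c` of `A = (ν(𝒜ᵢⱼ))`: for every
`k ≤ n`, the sum of the `k` smallest tropical eigenvalues is at most the sum of
the `k` smallest valuations of eigenvalues. -/
theorem stmt_8 {K : Type*} [Field K] [IsAlgClosed K] (ν : K → WithTop ℝ)
    (hν0 : ∀ a, ν a = ⊤ ↔ a = 0)
    (hνadd : ∀ a b, min (ν a) (ν b) ≤ ν (a + b))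
    (hνmul : ∀ a b, ν (a * b) = ν a + ν b)
    (n : ℕ) (A : Matrix (Fin n) (Fin n) K)
    (c : Fin n → WithTop ℝ) (hc : Monotone c)
    (hfact : ∀ y : ℝ,
      tropEval (minplusCharCoeff n fun i j => ν (A i j)) n y =
        minplusCharCoeff n (fun i j => ν (A i j)) n +
          ∑ i : Fin n, min (y : WithTop ℝ) (c i))
    (μ : Fin n → WithTop ℝ) (hμ : Monotone μ)
    (hroots : Multiset.map ν (Matrix.charpoly A).roots =
      (↑(List.ofFn μ) : Multiset (WithTop ℝ))) :
    ∀ k : ℕ, k ≤ n →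
      ∑ i ∈ Finset.univ.filter (fun i : Fin n => i.val < k), c i ≤
      ∑ i ∈ Finset.univ.filter (fun i : Fin n => i.val < k), μ i := by
  intro k hk
  classical
  by_cases hk0 : k = 0
  · subst hk0; simp
  have hstar := fun y : ℝ => star_bound hν0 hνadd hνmul A c hfact μ hμ hroots k y
  by_cases hS : (∑ i ∈ Finset.univ.filter (fun i : Fin n => i.val < k), μ i) = ⊤
  · rw [hS]; exact le_top
  by_cases htop : ∃ i : Fin n, i.val < k ∧ c i = ⊤
  · exfalso
    obtain ⟨iw, hiwk, hiwt⟩ := htop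
    set s := Finset.univ.filter (fun i : Fin n => c i = ⊤) with hs
    have hne : s.Nonempty := ⟨iw, by simp [hs, hiwt]⟩
    set i₀ := s.min' hne with hi₀
    have hi₀t : c i₀ = ⊤ := by
      have h5 := s.min'_mem hne
      simp only [hs, Finset.mem_filter, Finset.mem_univ, true_and] at h5
      exact h5
    have hi₀k : i₀.val < k := by
      have h5 := s.min'_le iw (by simp [hs, hiwt])
      rw [Fin.le_def] at h5
      omega
    have hi₀n : i₀.val < n := i₀.isLt
    have hlow : ∀ j : Fin n, j.val < i₀.val → c j ≠ ⊤ := by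
      intro j hj hcj
      have h5 := s.min'_le j (by simp [hs, hcj])
      rw [Fin.le_def] at h5
      omega
    have hhigh : ∀ j : Fin n, i₀.val ≤ j.val → c j = ⊤ := by
      intro j hj
      have h5 := hc (Fin.le_def.mpr hj)
      rw [hi₀t] at h5
      exact top_le_iff.mp h5
    obtain ⟨t₀, ht₀⟩ : ∃ t₀ : ℝ, ∀ j : Fin n, j.val < i₀.val → c j ≤ (t₀ : WithTop ℝ) := by
      rcases Nat.eq_zero_or_pos i₀.val with h0 | hpos
      · exact ⟨0, fun j hj => absurd hj (by omega)⟩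
      · have hlt' : i₀.val - 1 < n := by omega
        have hne' : c ⟨i₀.val - 1, hlt'⟩ ≠ ⊤ := hlow _ (by simp; omega)
        obtain ⟨t₀, ht₀'⟩ := WithTop.ne_top_iff_exists.mp hne'
        refine ⟨t₀, fun j hj => ?_⟩
        exact le_trans (hc (Fin.le_def.mpr (by simp; omega))) ht₀'.ge
    have hLfin : (∑ j ∈ Finset.univ.filter (fun j : Fin n => j.val < i₀.val), c j) ≠ ⊤ := by
      rw [WithTop.sum_ne_top]
      intro j hj
      exact hlow j (Finset.mem_filter.mp hj).2
    obtain ⟨C, hC⟩ := WithTop.ne_top_iff_exists.mp hLfin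
    obtain ⟨sr, hsr⟩ := WithTop.ne_top_iff_exists.mp hS
    set y := max t₀ (max 0 (sr - C + 1)) with hy
    have hy1 : t₀ ≤ y := le_max_left _ _
    have hy2 : (0:ℝ) ≤ y := le_trans (le_max_left _ _) (le_max_right _ _)
    have hy3 : sr - C + 1 ≤ y := le_trans (le_max_right _ _) (le_max_right _ _)
    have hmin : ∑ i : Fin n, min ((y:ℝ) : WithTop ℝ) (c i)
        = ((C + ((n - i₀.val : ℕ) : ℝ) * y : ℝ) : WithTop ℝ) := by
      have heach : ∀ i : Fin n, min ((y:ℝ):WithTop ℝ) (c i)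
          = (if i.val < i₀.val then c i else ((y:ℝ):WithTop ℝ)) := by
        intro i
        by_cases hi : i.val < i₀.val
        · rw [if_pos hi]
          exact min_eq_right (le_trans (ht₀ i hi) (WithTop.coe_le_coe.mpr hy1))
        · rw [if_neg hi]
          exact min_eq_left (by rw [hhigh i (by omega)]; exact le_top)
      rw [Finset.sum_congr rfl fun i _ => heach i, sum_if_split (le_of_lt hi₀n) c y,
        ← hC, ← WithTop.coe_add]
    have hstar' := hstar y
    rw [hmin, sum_if_split hk μ y, ← hsr, ← WithTop.coe_add, WithTop.coe_le_coe] at hstar'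
    have ha : ((n - k : ℕ) : ℝ) + 1 ≤ ((n - i₀.val : ℕ) : ℝ) := by
      have h5 : (n - k) + 1 ≤ n - i₀.val := by omega
      exact_mod_cast h5
    nlinarith [mul_le_mul_of_nonneg_right ha hy2]
  · push_neg at htop
    have hk1 : 1 ≤ k := by omega
    have hj₀lt : k - 1 < n := by omega
    set j₀ : Fin n := ⟨k-1, hj₀lt⟩ with hj₀
    have hj₀fin : c j₀ ≠ ⊤ := htop j₀ (by simp [hj₀]; omega)
    obtain ⟨t, ht⟩ := WithTop.ne_top_iff_exists.mp hj₀fin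
    have hmono1 : ∀ i : Fin n, i.val < k → c i ≤ c j₀ := by
      intro i hik
      exact hc (Fin.le_def.mpr (by simp [hj₀]; omega))
    by_cases hkn' : k = n
    · refine final_step hk c μ t (hstar t) ?_ ?_
      · intro i hik
        exact le_trans (hmono1 i hik) ht.ge
      · intro i hik
        exact absurd (by omega : i.val < k) hik
    · have hkn2 : k < n := by omega
      set jk : Fin n := ⟨k, hkn2⟩ with hjk
      by_cases hck : c jk = ⊤
      · refine final_step hk c μ t (hstar t) ?_ ?_
        · intro i hik
          exact le_trans (hmono1 i hik) ht.ge
        · intro i hik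
          have h5 : c jk ≤ c i := hc (Fin.le_def.mpr (by simp [hjk]; omega))
          rw [hck] at h5
          rw [top_le_iff.mp h5]
          exact le_top
      · obtain ⟨u, hu⟩ := WithTop.ne_top_iff_exists.mp hck
        refine final_step hk c μ u (hstar u) ?_ ?_
        · intro i hik
          refine le_trans (hmono1 i hik) (le_trans (hc (Fin.le_def.mpr ?_)) hu.ge)
          show k - 1 ≤ k
          omega
        · intro i hik
          exact le_trans hu.le (hc (Fin.le_def.mpr (by simp [hjk]; omega)))
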